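/- arXiv:2512.02452 — 4 statements merged into one kernel-verified Lean document; each statement's English description precedes it below -/
import Mathlib

section
/- Let n ≥ 1, let L₁ ∈ ℝ, L₂ ≥ 0, and let b̲ > 0. Suppose the PID gains k_p, k_i, k_d ∈ ℝ have the property that for every f ∈ F_{L₁,L₂}, every input gain b ≥ b̲, every setpoint y* ∈ ℝⁿ, and every global solution (x₁, x₂) of the PID-controlled closed-loop system with arbitrary initial conditions, lim_{t→∞} x₁(t) = y* and lim_{t→∞} x₂(t) = 0. Then necessarily (b̲·k_p, b̲·k_i, b̲·k_d) ∈ Ω_pid^(2). -/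
open scoped InnerProductSpace
open Filter Topology

noncomputable section

abbrev Euc (n : ℕ) := EuclideanSpace ℝ (Fin n)

variable {n : ℕ}

/-- The Jacobian of `f : ℝⁿ × ℝⁿ → ℝⁿ` with respect to its first argument. -/
def Jx1 (f : Euc n × Euc n → Euc n) (p : Euc n × Euc n) : Euc n →L[ℝ] Euc n :=
  (fderiv ℝ f p).comp (ContinuousLinearMap.inl ℝ (Euc n) (Euc n))

/-- The Jacobian of `f : ℝⁿ × ℝⁿ → ℝⁿ` with respect to its second argument. -/
def Jx2 (f : Euc n × Euc n → Euc n) (p : Euc n × Euc n) : Euc n →L[ℝ] Euc n :=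
  (fderiv ℝ f p).comp (ContinuousLinearMap.inr ℝ (Euc n) (Euc n))

/-- The class `F_{L₁,L₂}`. -/
def MemF (L₁ L₂ : ℝ) (f : Euc n × Euc n → Euc n) : Prop :=
  ContDiff ℝ 1 f ∧
  (∀ (p : Euc n × Euc n) (v : Euc n), ⟪Jx1 f p v, v⟫_ℝ ≤ L₁ * ‖v‖ ^ 2) ∧
  (∀ p : Euc n × Euc n, ‖Jx2 f p‖ ≤ L₂) ∧
  (∀ x₁ v w : Euc n, ⟪Jx1 f (x₁, 0) v, w⟫_ℝ = ⟪Jx1 f (x₁, 0) w, v⟫_ℝ)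

/-- The necessary region `Ω_pid^(2)` of PID gains `(k_p, k_i, k_d)`. -/
def OmegaPid2 (L₁ L₂ : ℝ) : Set (ℝ × ℝ × ℝ) :=
  {k : ℝ × ℝ × ℝ | L₁ < k.1 ∧ 0 < k.2.1 ∧ L₂ < k.2.2 ∧
    k.2.1 < (k.1 - L₁) * (k.2.2 - L₂)}

/-- `(x₁, x₂)` is a global solution on `[0,∞)` of the PID-controlled closed-loop system
`ẋ₁ = x₂`, `ẋ₂ = f(x₁,x₂) + b u`, with `u = k_p e + k_i ∫₀ᵗ e + k_d ė`, `e = y* - x₁`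
(so that `ė = -x₂`). -/
def IsClosedLoopSol (f : Euc n × Euc n → Euc n) (b kp ki kd : ℝ) (ystar : Euc n)
    (x₁ x₂ : ℝ → Euc n) : Prop :=
  ∀ t : ℝ, 0 ≤ t →
    HasDerivAt x₁ (x₂ t) t ∧
    HasDerivAt x₂ (f (x₁ t, x₂ t) + b •
      (kp • (ystar - x₁ t) + ki • (∫ s in (0:ℝ)..t, (ystar - x₁ s)) + kd • (-(x₂ t)))) t


lemma pid_hasDerivAt_exp_mul (μ t : ℝ) :
    HasDerivAt (fun s => Real.exp (μ*s)) (μ * Real.exp (μ*t)) t := by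
  have h := (Real.hasDerivAt_exp (μ*t)).comp t ((hasDerivAt_id t).const_mul μ)
  have h2 : μ * Real.exp (μ*t) = Real.exp (μ*t) * (μ*1) := by ring
  rw [h2]; exact h

lemma pid_hasDerivAt_cos_mul (ω t : ℝ) :
    HasDerivAt (fun s => Real.cos (ω*s)) (-(ω * Real.sin (ω*t))) t := by
  have h := (Real.hasDerivAt_cos (ω*t)).comp t ((hasDerivAt_id t).const_mul ω)
  have h2 : -(ω * Real.sin (ω*t)) = -Real.sin (ω*t) * (ω*1) := by ring
  rw [h2]; exact h

lemma pid_hasDerivAt_sin_mul (ω t : ℝ) :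
    HasDerivAt (fun s => Real.sin (ω*s)) (ω * Real.cos (ω*t)) t := by
  have h := (Real.hasDerivAt_sin (ω*t)).comp t ((hasDerivAt_id t).const_mul ω)
  have h2 : ω * Real.cos (ω*t) = Real.cos (ω*t) * (ω*1) := by ring
  rw [h2]; exact h

lemma pid_integral_exp_mul (μ t : ℝ) :
    (∫ s in (0:ℝ)..t, μ * Real.exp (μ*s)) = Real.exp (μ*t) - 1 := by
  have h := intervalIntegral.integral_eq_sub_of_hasDerivAt
    (f := fun s => Real.exp (μ*s)) (f' := fun s => μ * Real.exp (μ*s))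
    (fun s _ => pid_hasDerivAt_exp_mul μ s)
    (Continuous.intervalIntegrable (by fun_prop) 0 t)
  simpa using h

lemma pid_integral_expcos (σ ω t : ℝ) :
    (∫ s in (0:ℝ)..t, Real.exp (σ*s) * (σ * Real.cos (ω*s) - ω * Real.sin (ω*s)))
      = Real.exp (σ*t) * Real.cos (ω*t) - 1 := by
  have hF : ∀ s ∈ Set.uIcc (0:ℝ) t, HasDerivAt (fun u => Real.exp (σ*u) * Real.cos (ω*u))
      (Real.exp (σ*s) * (σ * Real.cos (ω*s) - ω * Real.sin (ω*s))) s := by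
    intro s _
    have h := (pid_hasDerivAt_exp_mul σ s).mul (pid_hasDerivAt_cos_mul ω s)
    have h2 : Real.exp (σ*s) * (σ * Real.cos (ω*s) - ω * Real.sin (ω*s))
        = σ * Real.exp (σ*s) * Real.cos (ω*s) + Real.exp (σ*s) * -(ω * Real.sin (ω*s)) := by ring
    rw [h2]; exact h
  have h := intervalIntegral.integral_eq_sub_of_hasDerivAt hF
    (Continuous.intervalIntegrable (by fun_prop) 0 t)
  simpa using h

lemma pid_const_sol (hn : 1 ≤ n) (L₁ L₂ : ℝ) (blow kp kd : ℝ) :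
    IsClosedLoopSol
      (fun p : Euc n × Euc n => L₁ • p.1 + L₂ • p.2 +
        (blow*kp - L₁) • (EuclideanSpace.single (⟨0, hn⟩ : Fin n) (1:ℝ)))
      blow kp 0 kd 0
      (fun _ => EuclideanSpace.single (⟨0, hn⟩ : Fin n) (1:ℝ))
      (fun _ => 0) := by
  set e₀ : Euc n := EuclideanSpace.single (⟨0, hn⟩ : Fin n) (1:ℝ) with he₀
  intro t ht
  refine ⟨hasDerivAt_const t e₀, ?_⟩
  have hrhs : (L₁ • e₀ + L₂ • (0:Euc n) + (blow*kp - L₁) • e₀) + blow •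
      (kp • ((0:Euc n) - e₀) + (0:ℝ) • (∫ s in (0:ℝ)..t, ((0:Euc n) - e₀)) +
        kd • (-(0:Euc n))) = (0:Euc n) := by
    rw [zero_smul]
    match_scalars
    ring
  beta_reduce
  rw [hrhs]
  exact hasDerivAt_const t 0

lemma pid_memF_lin (L₁ L₂ : ℝ) (hL₂ : 0 ≤ L₂) (d : Euc n) :
    MemF L₁ L₂ (fun p : Euc n × Euc n => L₁ • p.1 + L₂ • p.2 + d) := by
  set T : (Euc n × Euc n) →L[ℝ] Euc n :=
    L₁ • (ContinuousLinearMap.fst ℝ (Euc n) (Euc n)) +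
      L₂ • (ContinuousLinearMap.snd ℝ (Euc n) (Euc n)) with hT
  have hfe : (fun p : Euc n × Euc n => L₁ • p.1 + L₂ • p.2 + d) = fun p => T p + d := by
    funext p; simp [hT]
  have hfd : ∀ p : Euc n × Euc n,
      fderiv ℝ (fun p : Euc n × Euc n => L₁ • p.1 + L₂ • p.2 + d) p = T := by
    intro p
    rw [hfe]
    exact (T.hasFDerivAt.add_const d).fderiv
  have hJ1 : ∀ p : Euc n × Euc n,
      Jx1 (fun p : Euc n × Euc n => L₁ • p.1 + L₂ • p.2 + d) p
        = L₁ • ContinuousLinearMap.id ℝ (Euc n) := by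
    intro p; ext v
    simp [Jx1, hfd, hT]
  have hJ2 : ∀ p : Euc n × Euc n,
      Jx2 (fun p : Euc n × Euc n => L₁ • p.1 + L₂ • p.2 + d) p
        = L₂ • ContinuousLinearMap.id ℝ (Euc n) := by
    intro p; ext v
    simp [Jx2, hfd, hT]
  refine ⟨?_, ?_, ?_, ?_⟩
  · rw [hfe]; exact T.contDiff.add contDiff_const
  · intro p v
    simp only [hJ1, ContinuousLinearMap.smul_apply, ContinuousLinearMap.id_apply,
      real_inner_smul_left, real_inner_self_eq_norm_sq]
    exact le_rfl

  · intro p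
    refine ContinuousLinearMap.opNorm_le_bound _ hL₂ fun v => ?_
    have : Jx2 (fun p : Euc n × Euc n => L₁ • p.1 + L₂ • p.2 + d) p v = L₂ • v := by
      rw [hJ2]; rfl
    rw [this, norm_smul, Real.norm_eq_abs, abs_of_nonneg hL₂]
  · intro x₁ v w
    simp only [hJ1, ContinuousLinearMap.smul_apply, ContinuousLinearMap.id_apply,
      real_inner_smul_left]
    rw [real_inner_comm]

lemma pid_exp_sol (hn : 1 ≤ n) (L₁ L₂ : ℝ) (blow kp ki kd : ℝ) (μ : ℝ)
    (hroot : μ^3 + (blow*kd - L₂)*μ^2 + (blow*kp - L₁)*μ + blow*ki = 0) :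
    IsClosedLoopSol
      (fun p : Euc n × Euc n => L₁ • p.1 + L₂ • p.2 +
        (-(blow*ki)) • (EuclideanSpace.single (⟨0, hn⟩ : Fin n) (1:ℝ)))
      blow kp ki kd 0
      (fun t => (μ * Real.exp (μ*t)) • EuclideanSpace.single (⟨0, hn⟩ : Fin n) (1:ℝ))
      (fun t => (μ^2 * Real.exp (μ*t)) • EuclideanSpace.single (⟨0, hn⟩ : Fin n) (1:ℝ)) := by
  set e₀ : Euc n := EuclideanSpace.single (⟨0, hn⟩ : Fin n) (1:ℝ) with he₀
  intro t ht
  constructor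
  · have h := ((pid_hasDerivAt_exp_mul μ t).const_mul μ).smul_const e₀
    have h2 : (μ^2 * Real.exp (μ*t)) • e₀ = (μ * (μ * Real.exp (μ*t))) • e₀ := by
      congr 1; ring
    show HasDerivAt _ ((μ^2 * Real.exp (μ*t)) • e₀) t
    rw [h2]; exact h
  · have hI : (∫ s in (0:ℝ)..t, ((0:Euc n) - (μ * Real.exp (μ*s)) • e₀))
        = (1 - Real.exp (μ*t)) • e₀ := by
      have hcong : ∀ s : ℝ, (0:Euc n) - (μ * Real.exp (μ*s)) • e₀
          = (-(μ * Real.exp (μ*s))) • e₀ := by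
        intro s; rw [zero_sub, neg_smul]
      simp only [hcong]
      rw [intervalIntegral.integral_smul_const, intervalIntegral.integral_neg,
        pid_integral_exp_mul]
      congr 1; ring
    have h := ((pid_hasDerivAt_exp_mul μ t).const_mul (μ^2)).smul_const e₀
    show HasDerivAt _ _ t
    rw [hI]
    have hrhs : (L₁ • ((μ * Real.exp (μ*t)) • e₀) + L₂ • ((μ^2 * Real.exp (μ*t)) • e₀) +
          (-(blow*ki)) • e₀) + blow •
          (kp • ((0:Euc n) - (μ * Real.exp (μ*t)) • e₀) + ki • ((1 - Real.exp (μ*t)) • e₀) +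
            kd • (-((μ^2 * Real.exp (μ*t)) • e₀)))
        = (μ^2 * (μ * Real.exp (μ*t))) • e₀ := by
      match_scalars
      linear_combination (-Real.exp (μ*t)) * hroot
    exact hrhs ▸ h

lemma pid_osc_sol (hn : 1 ≤ n) (L₁ L₂ : ℝ) (blow kp ki kd : ℝ) (σ ω : ℝ)
    (hR : σ^3 - 3*σ*ω^2 + (blow*kd - L₂)*(σ^2 - ω^2) + (blow*kp - L₁)*σ + blow*ki = 0)
    (hI : 3*σ^2 - ω^2 + 2*(blow*kd - L₂)*σ + (blow*kp - L₁) = 0) :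
    IsClosedLoopSol
      (fun p : Euc n × Euc n => L₁ • p.1 + L₂ • p.2 +
        (-(blow*ki)) • (EuclideanSpace.single (⟨0, hn⟩ : Fin n) (1:ℝ)))
      blow kp ki kd 0
      (fun t => (Real.exp (σ*t) * (σ * Real.cos (ω*t) - ω * Real.sin (ω*t))) •
        EuclideanSpace.single (⟨0, hn⟩ : Fin n) (1:ℝ))
      (fun t => (Real.exp (σ*t) * ((σ^2 - ω^2) * Real.cos (ω*t) - 2*σ*ω * Real.sin (ω*t))) •
        EuclideanSpace.single (⟨0, hn⟩ : Fin n) (1:ℝ)) := by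
  set e₀ : Euc n := EuclideanSpace.single (⟨0, hn⟩ : Fin n) (1:ℝ) with he₀
  intro t ht
  constructor
  · have h := ((pid_hasDerivAt_exp_mul σ t).mul
      (((pid_hasDerivAt_cos_mul ω t).const_mul σ).sub
        ((pid_hasDerivAt_sin_mul ω t).const_mul ω))).smul_const e₀
    have h2 : (Real.exp (σ*t) * ((σ^2 - ω^2) * Real.cos (ω*t) - 2*σ*ω * Real.sin (ω*t))) • e₀
        = (σ * Real.exp (σ*t) * (σ * Real.cos (ω*t) - ω * Real.sin (ω*t)) +
            Real.exp (σ*t) * (σ * -(ω * Real.sin (ω*t)) - ω * (ω * Real.cos (ω*t)))) • e₀ := by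
      congr 1; ring
    beta_reduce
    rw [h2]; exact h
  · have hcong : ∀ s : ℝ, (0:Euc n) -
        (Real.exp (σ*s) * (σ * Real.cos (ω*s) - ω * Real.sin (ω*s))) • e₀
        = (-(Real.exp (σ*s) * (σ * Real.cos (ω*s) - ω * Real.sin (ω*s)))) • e₀ := by
      intro s; rw [zero_sub, neg_smul]
    have hInt : (∫ s in (0:ℝ)..t, ((0:Euc n) -
        (Real.exp (σ*s) * (σ * Real.cos (ω*s) - ω * Real.sin (ω*s))) • e₀))
        = (1 - Real.exp (σ*t) * Real.cos (ω*t)) • e₀ := by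
      simp only [hcong]
      rw [intervalIntegral.integral_smul_const, intervalIntegral.integral_neg,
        pid_integral_expcos]
      congr 1; ring
    have h := ((pid_hasDerivAt_exp_mul σ t).mul
      (((pid_hasDerivAt_cos_mul ω t).const_mul (σ^2 - ω^2)).sub
        ((pid_hasDerivAt_sin_mul ω t).const_mul (2*σ*ω)))).smul_const e₀
    beta_reduce
    rw [hInt]
    have hrhs : (L₁ • ((Real.exp (σ*t) * (σ * Real.cos (ω*t) - ω * Real.sin (ω*t))) • e₀) +
          L₂ • ((Real.exp (σ*t) * ((σ^2 - ω^2) * Real.cos (ω*t) - 2*σ*ω * Real.sin (ω*t))) • e₀) +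
          (-(blow*ki)) • e₀) + blow •
          (kp • ((0:Euc n) - (Real.exp (σ*t) * (σ * Real.cos (ω*t) - ω * Real.sin (ω*t))) • e₀) +
            ki • ((1 - Real.exp (σ*t) * Real.cos (ω*t)) • e₀) +
            kd • (-((Real.exp (σ*t) * ((σ^2 - ω^2) * Real.cos (ω*t) - 2*σ*ω * Real.sin (ω*t))) • e₀)))
        = (σ * Real.exp (σ*t) * ((σ^2 - ω^2) * Real.cos (ω*t) - 2*σ*ω * Real.sin (ω*t)) +
            Real.exp (σ*t) * ((σ^2 - ω^2) * -(ω * Real.sin (ω*t)) - 2*σ*ω * (ω * Real.cos (ω*t)))) • e₀ := by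
      match_scalars
      linear_combination (-(Real.exp (σ*t) * Real.cos (ω*t))) * hR +
        (Real.exp (σ*t) * Real.sin (ω*t) * ω) * hI
    exact hrhs ▸ h


/-- Every real (monic) cubic has a real root. -/
lemma pid_cubic_real_root (a2 a1 a0 : ℝ) : ∃ ρ : ℝ, ρ^3 + a2*ρ^2 + a1*ρ + a0 = 0 := by
  obtain ⟨A, hA, hA1, hA2⟩ : ∃ A, 0 ≤ A ∧ -A ≤ a2 ∧ a2 ≤ A :=
    ⟨|a2|, abs_nonneg _, neg_abs_le _, le_abs_self _⟩
  obtain ⟨B, hB, hB1, hB2⟩ : ∃ B, 0 ≤ B ∧ -B ≤ a1 ∧ a1 ≤ B :=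
    ⟨|a1|, abs_nonneg _, neg_abs_le _, le_abs_self _⟩
  obtain ⟨C, hC, hC1, hC2⟩ : ∃ C, 0 ≤ C ∧ -C ≤ a0 ∧ a0 ≤ C :=
    ⟨|a0|, abs_nonneg _, neg_abs_le _, le_abs_self _⟩
  set M : ℝ := 1 + A + B + C with hM
  have hM1 : (1:ℝ) ≤ M := by linarith
  have hM0 : (0:ℝ) ≤ M := by linarith
  have hMM : M ≤ M^2 := by nlinarith
  have hM2 : (1:ℝ) ≤ M^2 := by nlinarith
  have hcube : M^3 = M^2 + A*M^2 + B*M^2 + C*M^2 := by rw [hM]; ring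
  have h1 : a2*M^2 ≤ A*M^2 := mul_le_mul_of_nonneg_right hA2 (sq_nonneg M)
  have h1' : -(A*M^2) ≤ a2*M^2 := by nlinarith [mul_le_mul_of_nonneg_right hA1 (sq_nonneg M)]
  have h2 : a1*M ≤ B*M := mul_le_mul_of_nonneg_right hB2 hM0
  have h2' : -(B*M) ≤ a1*M := by nlinarith [mul_le_mul_of_nonneg_right hB1 hM0]
  have h4 : B*M ≤ B*M^2 := mul_le_mul_of_nonneg_left hMM hB
  have h5 : C ≤ C*M^2 := by nlinarith [mul_le_mul_of_nonneg_left hM2 hC]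
  have hple : -M ≤ M := by linarith
  have hcont : ContinuousOn (fun x : ℝ => x^3 + a2*x^2 + a1*x + a0) (Set.Icc (-M) M) := by
    fun_prop
  have hlow : (-M)^3 + a2*(-M)^2 + a1*(-M) + a0 ≤ 0 := by nlinarith
  have hhigh : 0 ≤ M^3 + a2*M^2 + a1*M + a0 := by nlinarith
  have hsub := intermediate_value_Icc hple hcont
  obtain ⟨ρ, -, hρ⟩ := hsub ⟨hlow, hhigh⟩
  exact ⟨ρ, hρ⟩

/-- The Routh–Hurwitz style necessity argument on the characteristic cubic. -/
lemma pid_routh (a2 a1 a0 : ℝ) (ha0 : a0 ≠ 0)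
    (hE : ∀ μ : ℝ, 0 < μ → μ^3 + a2*μ^2 + a1*μ + a0 ≠ 0)
    (hO : ∀ σ ω : ℝ, 0 ≤ σ → 0 < ω →
      ¬(σ^3 - 3*σ*ω^2 + a2*(σ^2 - ω^2) + a1*σ + a0 = 0 ∧
        3*σ^2 - ω^2 + 2*a2*σ + a1 = 0)) :
    0 < a1 ∧ 0 < a0 ∧ 0 < a2 ∧ a0 < a2*a1 := by
  obtain ⟨ρ, hρ⟩ := pid_cubic_real_root a2 a1 a0
  have hγa0 : a0 + ρ*(ρ^2 + a2*ρ + a1) = 0 := by linear_combination hρ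
  have hρ0 : ρ ≠ 0 := by
    intro h
    apply ha0
    rw [h] at hρ
    linarith [hρ]
  have hρneg : ρ < 0 := by
    rcases lt_trichotomy ρ 0 with h | h | h
    · exact h
    · exact absurd h hρ0
    · exact absurd hρ (hE ρ h)
  have key : 0 < a2 + ρ ∧ 0 < ρ^2 + a2*ρ + a1 := by
    by_cases hdisc : 4*(ρ^2 + a2*ρ + a1) ≤ (a2 + ρ)^2
    · obtain ⟨s, hs0, hs2⟩ : ∃ s : ℝ, 0 ≤ s ∧ s^2 = (a2+ρ)^2 - 4*(ρ^2 + a2*ρ + a1) :=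
        ⟨Real.sqrt _, Real.sqrt_nonneg _, Real.sq_sqrt (by linarith)⟩
      obtain ⟨μp, hμp⟩ : ∃ x : ℝ, x = (-(a2+ρ) + s)/2 := ⟨_, rfl⟩
      have hquad : μp^2 + (a2+ρ)*μp + (ρ^2 + a2*ρ + a1) = 0 := by
        rw [hμp]; linear_combination hs2/4
      have hproot : μp^3 + a2*μp^2 + a1*μp + a0 = 0 := by
        linear_combination (μp - ρ)*hquad + hγa0
      have hμp_nonpos : ¬(0 < μp) := fun h => hE μp h hproot
      have hμp_ne : μp ≠ 0 := by
        intro h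
        apply ha0
        rw [h] at hquad
        have hg : ρ^2 + a2*ρ + a1 = 0 := by linarith [hquad]
        linear_combination hγa0 - ρ * hg
      have hμp_neg : μp < 0 := lt_of_le_of_ne (not_lt.mp hμp_nonpos) hμp_ne
      have hβ : 0 < a2 + ρ := by
        rw [hμp] at hμp_neg
        linarith
      have hγ : 0 < ρ^2 + a2*ρ + a1 := by
        rw [hμp] at hμp_neg
        nlinarith [hs2, hs0]
      exact ⟨hβ, hγ⟩
    · push_neg at hdisc
      obtain ⟨ω, hωpos, hω2⟩ : ∃ ω : ℝ, 0 < ω ∧ ω^2 = (ρ^2 + a2*ρ + a1) - (a2+ρ)^2/4 :=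
        ⟨Real.sqrt _, Real.sqrt_pos.mpr (by linarith), Real.sq_sqrt (by linarith)⟩
      obtain ⟨σ, hσ⟩ : ∃ x : ℝ, x = -(a2+ρ)/2 := ⟨_, rfl⟩
      have hIeq : 3*σ^2 - ω^2 + 2*a2*σ + a1 = 0 := by
        rw [hσ]; linear_combination (-1 : ℝ)*hω2
      have hReq : σ^3 - 3*σ*ω^2 + a2*(σ^2 - ω^2) + a1*σ + a0 = 0 := by
        rw [hσ]; linear_combination (3*(a2+ρ)/2 - a2)*hω2 + hγa0
      have hσneg : σ < 0 := by
        by_contra h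
        push_neg at h
        exact hO σ ω h hωpos ⟨hReq, hIeq⟩
      have hβ : 0 < a2 + ρ := by rw [hσ] at hσneg; linarith
      have hγ : 0 < ρ^2 + a2*ρ + a1 := by nlinarith [sq_nonneg (a2+ρ)]
      exact ⟨hβ, hγ⟩
  obtain ⟨hβ, hγ⟩ := key
  have hr : 0 < -ρ := by linarith
  refine ⟨?_, ?_, ?_, ?_⟩
  · nlinarith [mul_pos hr hβ]
  · nlinarith [mul_pos hr hγ]
  · linarith
  · nlinarith [mul_pos hβ hγ, mul_pos (mul_pos hr hβ) hβ, mul_pos (mul_pos hr hr) hβ]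

/-- Theorem 1(ii): if the PID gains achieve global asymptotic tracking for every
`f ∈ F_{L₁,L₂}`, every `b ≥ b̲`, every setpoint and every global solution, then
necessarily `(b̲ k_p, b̲ k_i, b̲ k_d) ∈ Ω_pid^(2)`. -/

theorem pid_necessity (n : ℕ) (hn : 1 ≤ n) (L₁ L₂ : ℝ) (hL₂ : 0 ≤ L₂)
    (blow : ℝ) (hblow : 0 < blow) (kp ki kd : ℝ)
    (hstab : ∀ f : Euc n × Euc n → Euc n, MemF L₁ L₂ f →
      ∀ b : ℝ, blow ≤ b →
      ∀ ystar : Euc n, ∀ x₁ x₂ : ℝ → Euc n,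
        IsClosedLoopSol f b kp ki kd ystar x₁ x₂ →
        Tendsto x₁ atTop (𝓝 ystar) ∧ Tendsto x₂ atTop (𝓝 0)) :
    (blow * kp, blow * ki, blow * kd) ∈ OmegaPid2 L₁ L₂ := by
  have he₀ : ‖(EuclideanSpace.single (⟨0, hn⟩ : Fin n) (1:ℝ) : Euc n)‖ = 1 := by
    rw [EuclideanSpace.norm_single, norm_one]
  have hki0 : ki ≠ 0 := by
    intro h0
    subst h0
    obtain ⟨h1, -⟩ := hstab _ (pid_memF_lin L₁ L₂ hL₂ _) blow le_rfl 0 _ _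
      (pid_const_sol hn L₁ L₂ blow kp kd)
    have h2 := tendsto_nhds_unique h1 tendsto_const_nhds
    rw [← h2, norm_zero] at he₀
    exact one_ne_zero he₀.symm
  have hE : ∀ μ : ℝ, 0 < μ →
      μ^3 + (blow*kd - L₂)*μ^2 + (blow*kp - L₁)*μ + blow*ki ≠ 0 := by
    intro μ hμ hroot
    obtain ⟨h1, -⟩ := hstab _ (pid_memF_lin L₁ L₂ hL₂ _) blow le_rfl 0 _ _
      (pid_exp_sol hn L₁ L₂ blow kp ki kd μ hroot)
    have h3 : Tendsto (fun t : ℝ => ‖(μ * Real.exp (μ*t)) •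
        (EuclideanSpace.single (⟨0, hn⟩ : Fin n) (1:ℝ) : Euc n)‖) atTop (𝓝 0) := by
      simpa using h1.norm
    obtain ⟨t, ht0, hlt⟩ := ((eventually_ge_atTop (0:ℝ)).and
      (h3.eventually_lt_const hμ)).exists
    have hge : μ ≤ ‖(μ * Real.exp (μ*t)) •
        (EuclideanSpace.single (⟨0, hn⟩ : Fin n) (1:ℝ) : Euc n)‖ := by
      rw [norm_smul, Real.norm_eq_abs, he₀, mul_one,
        abs_of_pos (mul_pos hμ (Real.exp_pos _))]
      nlinarith [Real.one_le_exp (mul_nonneg hμ.le ht0)]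
    linarith
  have hO : ∀ σ ω : ℝ, 0 ≤ σ → 0 < ω →
      ¬(σ^3 - 3*σ*ω^2 + (blow*kd - L₂)*(σ^2 - ω^2) + (blow*kp - L₁)*σ + blow*ki = 0 ∧
        3*σ^2 - ω^2 + 2*(blow*kd - L₂)*σ + (blow*kp - L₁) = 0) := by
    rintro σ ω hσ hω ⟨hR, hIeq⟩
    obtain ⟨h1, -⟩ := hstab _ (pid_memF_lin L₁ L₂ hL₂ _) blow le_rfl 0 _ _
      (pid_osc_sol hn L₁ L₂ blow kp ki kd σ ω hR hIeq)
    obtain ⟨T, hT⟩ : ∃ T : ℕ → ℝ,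
        T = fun k : ℕ => Real.pi/(2*ω) + (k:ℝ)*(2*Real.pi/ω) := ⟨_, rfl⟩
    have hTnn : ∀ k : ℕ, 0 ≤ T k := by
      intro k; rw [hT]; positivity
    have hTtend : Tendsto T atTop atTop := by
      rw [hT]
      exact tendsto_atTop_add_const_left _ _
        (tendsto_natCast_atTop_atTop.atTop_mul_const (by positivity))
    have hval : ∀ k : ℕ, ω * T k = Real.pi/2 + (k:ℤ)*(2*Real.pi) := by
      intro k; rw [hT]; push_cast; field_simp
    have h3 : Tendsto (fun k : ℕ => ‖(Real.exp (σ*(T k)) *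
        (σ * Real.cos (ω*(T k)) - ω * Real.sin (ω*(T k)))) •
        (EuclideanSpace.single (⟨0, hn⟩ : Fin n) (1:ℝ) : Euc n)‖) atTop (𝓝 0) := by
      simpa [Function.comp] using (h1.comp hTtend).norm
    obtain ⟨k, hk⟩ := (h3.eventually_lt_const hω).exists
    have hcs : Real.cos (ω * T k) = 0 := by
      rw [hval k, Real.cos_add_int_mul_two_pi, Real.cos_pi_div_two]
    have hss : Real.sin (ω * T k) = 1 := by
      rw [hval k, Real.sin_add_int_mul_two_pi, Real.sin_pi_div_two]
    rw [norm_smul, Real.norm_eq_abs, he₀, mul_one, hcs, hss] at hk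
    have habs : |Real.exp (σ*(T k)) * (σ * 0 - ω * 1)| = Real.exp (σ*(T k)) * ω := by
      rw [show Real.exp (σ*(T k)) * (σ * 0 - ω * 1) = -(Real.exp (σ*(T k)) * ω) by ring,
        abs_neg, abs_of_pos (by positivity)]
    rw [habs] at hk
    nlinarith [Real.one_le_exp (mul_nonneg hσ (hTnn k))]
  have ha0 : blow*ki ≠ 0 := mul_ne_zero (ne_of_gt hblow) hki0
  obtain ⟨hA1, hA0, hA2, hprod⟩ :=
    pid_routh (blow*kd - L₂) (blow*kp - L₁) (blow*ki) ha0 hE hO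
  simp only [OmegaPid2, Set.mem_setOf_eq]
  refine ⟨by linarith, by linarith, by linarith, ?_⟩
  have := mul_comm (blow*kd - L₂) (blow*kp - L₁)
  linarith
end
end

section
/- Let L₂ ≥ 0 and let k₀, φ₀, ψ₀ be positive real numbers satisfying φ₀ψ₀ − k₀ > 2L₂√(k₀ψ₀). Define μ = (φ₀ψ₀ + k₀)/(2(φ₀ + L₂²)). Then the following three inequalities hold: (i) ψ₀ > μ; (ii) (μφ₀ − k₀)(ψ₀ − μ) > μ²L₂²; (iii) μφ₀ > k₀. -/
/-- The three key inequalities \eqref{eqB1}–\eqref{eqB3}: if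
`φ₀ψ₀ − k₀ > 2L₂√(k₀ψ₀)` and `μ = (φ₀ψ₀ + k₀)/(2(φ₀ + L₂²))`, then
`ψ₀ > μ`, `(μφ₀ − k₀)(ψ₀ − μ) > μ²L₂²` and `μφ₀ > k₀`. -/
theorem mu_inequalities (L₂ k₀ φ₀ ψ₀ : ℝ) (hL₂ : 0 ≤ L₂)
    (hk₀ : 0 < k₀) (hφ₀ : 0 < φ₀) (hψ₀ : 0 < ψ₀)
    (h : 2 * L₂ * Real.sqrt (k₀ * ψ₀) < φ₀ * ψ₀ - k₀) :
    let μ := (φ₀ * ψ₀ + k₀) / (2 * (φ₀ + L₂ ^ 2))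
    ψ₀ > μ ∧ (μ * φ₀ - k₀) * (ψ₀ - μ) > μ ^ 2 * L₂ ^ 2 ∧ μ * φ₀ > k₀ := by
  intro μ
  have hs : 0 ≤ Real.sqrt (k₀ * ψ₀) := Real.sqrt_nonneg _
  have hsq : Real.sqrt (k₀ * ψ₀) ^ 2 = k₀ * ψ₀ :=
    Real.sq_sqrt (by positivity)
  have hA : 0 < φ₀ * ψ₀ - k₀ := lt_of_le_of_lt (by positivity) h
  have hA2 : 4 * L₂ ^ 2 * (k₀ * ψ₀) < (φ₀ * ψ₀ - k₀) ^ 2 := by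
    nlinarith [mul_nonneg hL₂ hs]
  have hD : 0 < 2 * (φ₀ + L₂ ^ 2) := by positivity
  have hμ : μ = (φ₀ * ψ₀ + k₀) / (2 * (φ₀ + L₂ ^ 2)) := rfl
  refine ⟨?_, ?_, ?_⟩
  · rw [hμ, gt_iff_lt, div_lt_iff₀ hD]
    nlinarith
  · rw [hμ, gt_iff_lt, div_pow]
    rw [div_mul_eq_mul_div, div_mul_eq_mul_div, div_sub' hD.ne',
      sub_div' hD.ne', div_mul_div_comm, div_lt_div_iff₀ (by positivity) (by positivity)]
    have P : L₂ ^ 2 * (φ₀ * ψ₀ + k₀) ^ 2 <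
        ((φ₀ * ψ₀ + k₀) * φ₀ - 2 * (φ₀ + L₂ ^ 2) * k₀) *
          (ψ₀ * (2 * (φ₀ + L₂ ^ 2)) - (φ₀ * ψ₀ + k₀)) := by
      nlinarith [mul_lt_mul_of_pos_left hA2 hφ₀,
        mul_le_mul_of_nonneg_left hA2.le (sq_nonneg L₂)]
    nlinarith [mul_lt_mul_of_pos_right P (pow_pos hD 2)]
  · rw [hμ, gt_iff_lt, div_mul_eq_mul_div, lt_div_iff₀ hD]
    nlinarith [mul_lt_mul_of_pos_left hA2 hφ₀, mul_pos hφ₀ hA]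
end

section
/- Let k₀ > 0, μ > 0, and let φ₀, ψ₀, ψ be real numbers with ψ ≥ ψ₀ > μ and μφ₀ > k₀. Then the 3×3 real symmetric matrix P₃ = ½·[[μk₀, k₀, 0], [k₀, φ₀ + μψ, μ], [0, μ, 1]] is positive definite. Consequently, for any n ≥ 1, the Kronecker product P = P₃ ⊗ I_n is positive definite. -/
open Matrix Kronecker

lemma P3_posdef (k₀ μ φ₀ ψ₀ ψ : ℝ) (hk₀ : 0 < k₀) (hμ : 0 < μ)
    (hψ : ψ₀ ≤ ψ) (hψ₀ : μ < ψ₀) (hφ₀ : k₀ < μ * φ₀) :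
    ((1 / 2 : ℝ) • !![μ * k₀, k₀, 0; k₀, φ₀ + μ * ψ, μ; 0, μ, 1]).PosDef := by
  rw [posDef_iff_dotProduct_mulVec]
  constructor
  · ext i j
    fin_cases i <;> fin_cases j <;> simp [conjTranspose_apply]
  · intro x hx
    obtain ⟨i, hi⟩ := Function.ne_iff.mp hx
    set Q : ℝ := (1/2) * (μ * k₀ * x 0 ^ 2 + 2 * k₀ * x 0 * x 1 + (φ₀ + μ * ψ) * x 1 ^ 2
            + 2 * μ * x 1 * x 2 + x 2 ^ 2) with hQ
    have key : dotProduct (star x)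
        (((1 / 2 : ℝ) • !![μ * k₀, k₀, 0; k₀, φ₀ + μ * ψ, μ; 0, μ, 1]) *ᵥ x) = Q := by
      simp [hQ, dotProduct, mulVec, Fin.sum_univ_three, Matrix.smul_apply]
      ring
    rw [key]
    have hc : 0 < μ * φ₀ - k₀ + μ * μ * (ψ - μ) := by nlinarith
    have hsos : μ * Q = (1/2) * (k₀ * (μ * x 0 + x 1) ^ 2
        + (μ * φ₀ - k₀ + μ * μ * (ψ - μ)) * x 1 ^ 2 + μ * (x 2 + μ * x 1) ^ 2) := by
      rw [hQ]; ring
    have hQpos : 0 < μ * Q := by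
      rcases eq_or_ne (x 1) 0 with h1 | h1
      · rw [hsos, h1]
        have hA := mul_nonneg hk₀.le (sq_nonneg (μ * x 0 + 0))
        have hC := mul_nonneg hμ.le (sq_nonneg (x 2 + μ * 0))
        fin_cases i <;> simp only at hi
        · have hx0 : 0 < x 0 ^ 2 := (sq_nonneg _).lt_of_ne' (pow_ne_zero 2 hi)
          have := mul_pos hk₀ (mul_pos (mul_pos hμ hμ) hx0)
          nlinarith
        · exact absurd h1 hi
        · have hx2 : 0 < x 2 ^ 2 := (sq_nonneg _).lt_of_ne' (pow_ne_zero 2 hi)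
          have := mul_pos hμ hx2
          nlinarith
      · rw [hsos]
        have hx1 : 0 < x 1 ^ 2 := (sq_nonneg _).lt_of_ne' (pow_ne_zero 2 h1)
        have hA := mul_nonneg hk₀.le (sq_nonneg (μ * x 0 + x 1))
        have hC := mul_nonneg hμ.le (sq_nonneg (x 2 + μ * x 1))
        have hB := mul_pos hc hx1
        linarith
    have := div_pos hQpos hμ
    rwa [mul_div_cancel_left₀ _ hμ.ne'] at this

lemma kron_one_posdef {A : Matrix (Fin 3) (Fin 3) ℝ} (hA : A.PosDef) (n : ℕ) :
    (A ⊗ₖ (1 : Matrix (Fin n) (Fin n) ℝ)).PosDef := by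
  rw [posDef_iff_dotProduct_mulVec]
  constructor
  · ext ⟨i, j⟩ ⟨k, l⟩
    have h := congrFun (congrFun hA.1 i) k
    simp only [conjTranspose_apply, kroneckerMap_apply, Matrix.one_apply, star_trivial] at *
    by_cases hjl : j = l <;> by_cases hlj : l = j <;> simp_all
  · intro x hx
    have key : dotProduct (star x) ((A ⊗ₖ (1 : Matrix (Fin n) (Fin n) ℝ)) *ᵥ x)
        = ∑ j : Fin n, dotProduct (star fun i => x (i, j)) (A *ᵥ fun i => x (i, j)) := by
      simp only [dotProduct, mulVec, star_trivial, kroneckerMap_apply, Matrix.one_apply,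
        Fintype.sum_prod_type, mul_ite, mul_one, mul_zero, ite_mul, zero_mul,
        Finset.sum_ite_eq, Finset.sum_ite_eq', Finset.mem_univ, if_true]
      rw [Finset.sum_comm]
    rw [key]
    obtain ⟨⟨i0, j0⟩, hij⟩ := Function.ne_iff.mp hx
    refine Finset.sum_pos' (fun j _ => ?_) ⟨j0, Finset.mem_univ _, ?_⟩
    · by_cases h : (fun i => x (i, j)) = 0
      · simp [h]
      · exact (hA.dotProduct_mulVec_pos h).le
    · refine hA.dotProduct_mulVec_pos fun h => hij ?_
      exact congrFun h i0

/-- Positive definiteness of the matrix `P₃ = ½[[μk₀, k₀, 0], [k₀, φ₀+μψ, μ], [0, μ, 1]]`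
and of its Kronecker product with the identity `I_n`, under `k₀ > 0`, `μ > 0`,
`ψ ≥ ψ₀ > μ` and `μφ₀ > k₀`. -/
theorem P_posdef (k₀ μ φ₀ ψ₀ ψ : ℝ) (hk₀ : 0 < k₀) (hμ : 0 < μ)
    (hψ : ψ₀ ≤ ψ) (hψ₀ : μ < ψ₀) (hφ₀ : k₀ < μ * φ₀) :
    let P₃ : Matrix (Fin 3) (Fin 3) ℝ :=
      (1 / 2 : ℝ) • !![μ * k₀, k₀, 0; k₀, φ₀ + μ * ψ, μ; 0, μ, 1]
    P₃.PosDef ∧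
    ∀ n : ℕ, 1 ≤ n → (P₃ ⊗ₖ (1 : Matrix (Fin n) (Fin n) ℝ)).PosDef := by
  intro P₃
  have hP := P3_posdef k₀ μ φ₀ ψ₀ ψ hk₀ hμ hψ hψ₀ hφ₀
  exact ⟨hP, fun n _ => kron_one_posdef hP n⟩
end

section
/- Let L₁ ∈ ℝ, L₂ ≥ 0, and let f ∈ G_{L₁,L₂}. Then there exist a scalar function U : ℝⁿ → ℝ and a twice continuously differentiable scalar function S : ℝⁿ → ℝ such that f(x₁, x₂) = ∇U(x₁) + ∇²S(x₁)·x₂ for all x₁, x₂ ∈ ℝⁿ. -/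
open scoped InnerProductSpace

noncomputable section

variable {n : ℕ}

/-- The Hessian of each component of `f` with respect to `x₂` vanishes identically. -/
def HessX2Zero (f : Euc n × Euc n → Euc n) : Prop :=
  ∀ x₁ x₂ v w : Euc n,
    fderiv ℝ (fun z => fderiv ℝ (fun z' => f (x₁, z')) z v) x₂ w = 0

/-- The class `G_{L₁,L₂} ⊆ F_{L₁,L₂}`. -/
def MemG (L₁ L₂ : ℝ) (f : Euc n × Euc n → Euc n) : Prop :=
  ContDiff ℝ 2 f ∧ MemF L₁ L₂ f ∧ HessX2Zero f ∧
  ∃ S : Euc n → ℝ, ContDiff ℝ 2 S ∧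
    ∀ x₁ v : Euc n, Jx2 f (x₁, (0 : Euc n)) v = fderiv ℝ (gradient S) x₁ v

lemma exists_potential (g : Euc n → Euc n) (hg : ContDiff ℝ 1 g)
    (hsym : ∀ x v w : Euc n, ⟪fderiv ℝ g x v, w⟫_ℝ = ⟪fderiv ℝ g x w, v⟫_ℝ) :
    ∃ U : Euc n → ℝ, Differentiable ℝ U ∧ ∀ x, gradient U x = g x := by
  have hgc : Continuous g := hg.continuous
  have hgd : Differentiable ℝ g := hg.differentiable one_ne_zero
  have hfc : Continuous (fun x => fderiv ℝ g x) := hg.continuous_fderiv one_ne_zero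
  set U : Euc n → ℝ := fun x => ∫ t in (0:ℝ)..1, ⟪g (t • x), x⟫_ℝ with hU
  set F' : Euc n → ℝ → (Euc n →L[ℝ] ℝ) := fun x t =>
    innerSL ℝ (g (t • x)) + t • ((innerSL ℝ x).comp (fderiv ℝ g (t • x))) with hF'
  -- derivative of x ↦ ⟪g (t • x), x⟫ is F' x t
  have h_diff : ∀ (t : ℝ) (x : Euc n),
      HasFDerivAt (fun y => ⟪g (t • y), y⟫_ℝ) (F' x t) x := by
    intro t x
    have h1 : HasFDerivAt (fun y : Euc n => t • y)
        (t • ContinuousLinearMap.id ℝ (Euc n)) x := (hasFDerivAt_id x).const_smul t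
    have h2 : HasFDerivAt (fun y => g (t • y))
        ((fderiv ℝ g (t • x)).comp (t • ContinuousLinearMap.id ℝ (Euc n))) x :=
      ((hgd (t • x)).hasFDerivAt).comp x h1
    have h3 := h2.inner ℝ (hasFDerivAt_id x)
    refine h3.congr_fderiv ?_
    ext v
    simp only [hF', ContinuousLinearMap.add_apply, ContinuousLinearMap.smul_apply,
      ContinuousLinearMap.coe_comp', Function.comp_apply, ContinuousLinearMap.prod_apply,
      ContinuousLinearMap.coe_id', id_eq, fderivInnerCLM_apply, innerSL_apply_apply, map_smul,
      real_inner_smul_left, smul_eq_mul]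
    rw [real_inner_comm x]
  have hF'cont : Continuous (fun p : ℝ × Euc n => F' p.2 p.1) := by
    apply Continuous.add
    · exact (innerSL ℝ).continuous.comp (hgc.comp (continuous_fst.smul continuous_snd))
    · exact continuous_fst.smul
        (Continuous.clm_comp ((innerSL ℝ).continuous.comp continuous_snd)
          (hfc.comp (continuous_fst.smul continuous_snd)))
  have key : ∀ x₀ : Euc n, HasGradientAt U (g x₀) x₀ := by
    intro x₀
    obtain ⟨C, hC⟩ := (((isCompact_Icc (a := (0:ℝ)) (b := 1)).prod
      (isCompact_closedBall x₀ 1)).exists_bound_of_continuousOn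
      (hF'cont.continuousOn))
    have hFi : ∀ x : Euc n, IntervalIntegrable (fun t : ℝ => ⟪g (t • x), x⟫_ℝ)
        MeasureTheory.volume 0 1 := by
      intro x
      exact (Continuous.inner (hgc.comp (continuous_id.smul continuous_const))
        continuous_const).intervalIntegrable 0 1
    have hmain := intervalIntegral.hasFDerivAt_integral_of_dominated_of_fderiv_le
      (F := fun x t => ⟪g (t • x), x⟫_ℝ) (F' := F') (x₀ := x₀) (a := 0) (b := 1)
      (bound := fun _ => C) (μ := MeasureTheory.volume) (Metric.ball_mem_nhds x₀ one_pos)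
      (Filter.Eventually.of_forall fun x => ((Continuous.inner
        (hgc.comp (continuous_id.smul continuous_const)) continuous_const)).aestronglyMeasurable)
      (hFi x₀)
      ((hF'cont.comp (continuous_id.prodMk continuous_const)).aestronglyMeasurable)
      (MeasureTheory.ae_of_all _ (fun t ht x hx => by
        have ht' : t ∈ Set.Ioc (0:ℝ) 1 := by rwa [Set.uIoc_of_le zero_le_one] at ht
        exact hC (t, x) ⟨Set.mem_Icc_of_Ioc ht', Metric.ball_subset_closedBall hx⟩))
      (intervalIntegrable_const)
      (MeasureTheory.ae_of_all _ (fun t ht x hx => h_diff t x))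
    -- now compute the integral of F' x₀
    have hF'int : IntervalIntegrable (F' x₀) MeasureTheory.volume 0 1 :=
      ((hF'cont.comp (continuous_id.prodMk continuous_const)).intervalIntegrable 0 1)
    rw [hasGradientAt_iff_hasFDerivAt]
    refine hmain.congr_fderiv ?_
    ext v
    rw [ContinuousLinearMap.intervalIntegral_apply hF'int]
    have hφ : ∀ t ∈ Set.uIcc (0:ℝ) 1, HasDerivAt (fun t : ℝ => t * ⟪g (t • x₀), v⟫_ℝ)
        (F' x₀ t v) t := by
      intro t _
      have h1 : HasDerivAt (fun t : ℝ => t • x₀) x₀ t := by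
        simpa using (hasDerivAt_id t).smul_const x₀
      have h2 : HasFDerivAt (fun y => ⟪g y, v⟫_ℝ)
          ((innerSL ℝ v).comp (fderiv ℝ g (t • x₀))) (t • x₀) := by
        have := ((hgd (t • x₀)).hasFDerivAt).inner ℝ (hasFDerivAt_const v (t • x₀))
        refine this.congr_fderiv ?_
        ext w
        simp only [ContinuousLinearMap.coe_comp', Function.comp_apply,
          ContinuousLinearMap.prod_apply, fderivInnerCLM_apply, innerSL_apply_apply,
          ContinuousLinearMap.zero_apply, inner_zero_right, add_zero, zero_add]
        rw [real_inner_comm]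
      have h3 : HasDerivAt (fun t : ℝ => ⟪g (t • x₀), v⟫_ℝ)
          (⟪v, fderiv ℝ g (t • x₀) x₀⟫_ℝ) t := by
        have h5 := h2.comp_hasDerivAt t h1
        simp only [ContinuousLinearMap.coe_comp', Function.comp_apply, innerSL_apply_apply] at h5
        exact h5
      have h4 := (hasDerivAt_id t).mul h3
      refine h4.congr_deriv ?_
      simp only [hF', ContinuousLinearMap.add_apply, ContinuousLinearMap.smul_apply,
        ContinuousLinearMap.coe_comp', Function.comp_apply, innerSL_apply_apply, smul_eq_mul, id_eq]
      rw [real_inner_comm (fderiv ℝ g (t • x₀) v) x₀, hsym (t • x₀) v x₀,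
        real_inner_comm v (fderiv ℝ g (t • x₀) x₀)]
      ring
    have := intervalIntegral.integral_eq_sub_of_hasDerivAt hφ
      (by
        have : Continuous (fun t : ℝ => F' x₀ t v) :=
          (hF'cont.comp (continuous_id.prodMk continuous_const)).clm_apply continuous_const
        exact this.intervalIntegrable 0 1)
    rw [this]
    simp only [InnerProductSpace.toDual_apply_apply, one_smul, zero_smul, zero_mul, one_mul, sub_zero]
  exact ⟨U, fun x => ((key x).hasFDerivAt).differentiableAt,
    fun x => (key x).gradient⟩


lemma affine_in_x2 (f : Euc n × Euc n → Euc n) (hf2 : ContDiff ℝ 2 f)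
    (hhess : ∀ x₁ x₂ v w : Euc n,
      fderiv ℝ (fun z => fderiv ℝ (fun z' => f (x₁, z')) z v) x₂ w = 0)
    (x₁ x₂ : Euc n) :
    f (x₁, x₂) = f (x₁, 0) + Jx2 f (x₁, 0) x₂ := by
  have hfd : Differentiable ℝ f := hf2.differentiable (by norm_num)
  set k : Euc n → Euc n := fun z => f (x₁, z) with hk
  have hkC : ContDiff ℝ 2 k := hf2.comp (contDiff_const.prodMk contDiff_id)
  have hkD : ∀ z, HasFDerivAt k (Jx2 f (x₁, z)) z := by
    intro z
    have h1 : HasFDerivAt (fun z : Euc n => ((x₁, z) : Euc n × Euc n))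
        (ContinuousLinearMap.inr ℝ (Euc n) (Euc n)) z :=
      HasFDerivAt.prodMk (hasFDerivAt_const x₁ z) (hasFDerivAt_id z)
    exact ((hfd (x₁, z)).hasFDerivAt).comp z h1
  have hkd : Differentiable ℝ k := hkC.differentiable (by norm_num)
  have hfderivC : ContDiff ℝ 1 (fun z => fderiv ℝ k z) := hkC.fderiv_right (by norm_num)
  have hconst : ∀ z v, fderiv ℝ k z v = fderiv ℝ k 0 v := by
    intro z v
    have hdif : Differentiable ℝ (fun z => fderiv ℝ k z v) :=
      (hfderivC.differentiable one_ne_zero).clm_apply (differentiable_const v)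
    have h9 : ∀ y : Euc n, fderiv ℝ (fun z => fderiv ℝ k z v) y = 0 := by
      intro y
      refine ContinuousLinearMap.ext fun w => ?_
      simpa using hhess x₁ y v w
    exact is_const_of_fderiv_eq_zero (𝕜 := ℝ) hdif h9 z 0
  have hm : ∀ z, HasFDerivAt (fun z => k z - fderiv ℝ k 0 z) (0 : Euc n →L[ℝ] Euc n) z := by
    intro z
    have h := (hkd z).hasFDerivAt.sub ((fderiv ℝ k 0).hasFDerivAt (x := z))
    have he : fderiv ℝ k z - fderiv ℝ k 0 = 0 := by
      refine ContinuousLinearMap.ext fun v => ?_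
      simp [hconst z v]
    rwa [he] at h
  have hcm : ∀ z : Euc n, k z - fderiv ℝ k 0 z = k 0 - fderiv ℝ k 0 0 :=
    fun z => is_const_of_fderiv_eq_zero (𝕜 := ℝ) (fun y => (hm y).differentiableAt)
      (fun y => (hm y).fderiv) z 0
  have h0 := hcm x₂
  simp only [map_zero, sub_zero] at h0
  have hJ : fderiv ℝ k 0 = Jx2 f (x₁, 0) := (hkD 0).fderiv
  rw [hJ] at h0
  have hfin : k x₂ = k 0 + Jx2 f (x₁, 0) x₂ := by
    rw [← h0]; abel
  simpa [hk] using hfin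

/-- Remark 3: every `f ∈ G_{L₁,L₂}` admits the decomposition
`f(x₁,x₂) = ∇U(x₁) + ∇²S(x₁)·x₂` for some scalar potentials `U` and `S`. -/
theorem memG_decomposition (n : ℕ) (L₁ L₂ : ℝ) (hL₂ : 0 ≤ L₂)
    (f : Euc n × Euc n → Euc n) (hf : MemG L₁ L₂ f) :
    ∃ (U S : Euc n → ℝ), Differentiable ℝ U ∧ ContDiff ℝ 2 S ∧
      ∀ x₁ x₂ : Euc n,
        f (x₁, x₂) = gradient U x₁ + fderiv ℝ (gradient S) x₁ x₂ := by
  obtain ⟨hf2, ⟨hf1, _hmono, _hbd, hsymF⟩, hhess, S, hSc, hS2⟩ := hf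
  have hfd : Differentiable ℝ f := hf2.differentiable (by norm_num)
  set g : Euc n → Euc n := fun x => f (x, 0) with hg
  have hgD : ∀ x, HasFDerivAt g (Jx1 f (x, 0)) x := by
    intro x
    have h1 : HasFDerivAt (fun y : Euc n => ((y, 0) : Euc n × Euc n))
        (ContinuousLinearMap.inl ℝ (Euc n) (Euc n)) x :=
      HasFDerivAt.prodMk (hasFDerivAt_id x) (hasFDerivAt_const 0 x)
    exact ((hfd (x, 0)).hasFDerivAt).comp x h1
  have hgC : ContDiff ℝ 1 g := (hf2.of_le one_le_two).comp (contDiff_id.prodMk contDiff_const)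
  have hsym : ∀ x v w : Euc n, ⟪fderiv ℝ g x v, w⟫_ℝ = ⟪fderiv ℝ g x w, v⟫_ℝ := by
    intro x v w
    rw [(hgD x).fderiv]
    exact hsymF x v w
  obtain ⟨U, hUd, hUg⟩ := exists_potential g hgC hsym
  refine ⟨U, S, hUd, hSc, fun x₁ x₂ => ?_⟩
  rw [affine_in_x2 f hf2 hhess x₁ x₂, hUg x₁, ← hS2 x₁ x₂]
end
end
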